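/- Let H be a Hilbert space over 𝕜, K₁, K₂ ∈ B(H), and F : Ω → H a Bessel mapping with bound B. Then F ⊕ F : Ω → H ⊕ H (ω ↦ (F ω, F ω)) is a continuous (K₁ ⊕ K₂)-frame for H ⊕ H (for some positive bounds) if and only if K₁ = 0 and K₂ = 0. -/

import Mathlib

open MeasureTheory ContinuousLinearMap

/-- The direct sum operator `K₁ ⊕ K₂` on the super Hilbert space `H ⊕ H`, mapping
`(u, v)` to `(K₁ u, K₂ v)`. -/
noncomputable def prodOp {𝕜 : Type*} [RCLike 𝕜]
    {H₁ : Type*} [NormedAddCommGroup H₁] [InnerProductSpace 𝕜 H₁]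
    {H₂ : Type*} [NormedAddCommGroup H₂] [InnerProductSpace 𝕜 H₂]
    (K₁ : H₁ →L[𝕜] H₁) (K₂ : H₂ →L[𝕜] H₂) :
    WithLp 2 (H₁ × H₂) →L[𝕜] WithLp 2 (H₁ × H₂) :=
  ((WithLp.prodContinuousLinearEquiv 2 𝕜 H₁ H₂).symm.toContinuousLinearMap).comp
    ((K₁.prodMap K₂).comp (WithLp.prodContinuousLinearEquiv 2 𝕜 H₁ H₂).toContinuousLinearMap)

lemma prodOp_fst {𝕜 : Type*} [RCLike 𝕜]
    {H₁ : Type*} [NormedAddCommGroup H₁] [InnerProductSpace 𝕜 H₁]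
    {H₂ : Type*} [NormedAddCommGroup H₂] [InnerProductSpace 𝕜 H₂]
    (K₁ : H₁ →L[𝕜] H₁) (K₂ : H₂ →L[𝕜] H₂) (x : WithLp 2 (H₁ × H₂)) :
    (prodOp K₁ K₂ x).fst = K₁ x.fst := rfl

lemma prodOp_snd {𝕜 : Type*} [RCLike 𝕜]
    {H₁ : Type*} [NormedAddCommGroup H₁] [InnerProductSpace 𝕜 H₁]
    {H₂ : Type*} [NormedAddCommGroup H₂] [InnerProductSpace 𝕜 H₂]
    (K₁ : H₁ →L[𝕜] H₁) (K₂ : H₂ →L[𝕜] H₂) (x : WithLp 2 (H₁ × H₂)) :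
    (prodOp K₁ K₂ x).snd = K₂ x.snd := rfl

lemma adjoint_prodOp {𝕜 : Type*} [RCLike 𝕜]
    {H₁ : Type*} [NormedAddCommGroup H₁] [InnerProductSpace 𝕜 H₁] [CompleteSpace H₁]
    {H₂ : Type*} [NormedAddCommGroup H₂] [InnerProductSpace 𝕜 H₂] [CompleteSpace H₂]
    (K₁ : H₁ →L[𝕜] H₁) (K₂ : H₂ →L[𝕜] H₂) :
    ContinuousLinearMap.adjoint (prodOp K₁ K₂) =
      prodOp (ContinuousLinearMap.adjoint K₁) (ContinuousLinearMap.adjoint K₂) := by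
  symm
  rw [ContinuousLinearMap.eq_adjoint_iff]
  intro x y
  simp only [WithLp.prod_inner_apply, prodOp_fst, prodOp_snd,
    ContinuousLinearMap.adjoint_inner_left, ContinuousLinearMap.adjoint_inner_right]
  exact congrArg₂ (· + ·) (ContinuousLinearMap.adjoint_inner_left K₁ _ _)
    (ContinuousLinearMap.adjoint_inner_left K₂ _ _)

/-- For a Bessel mapping `F : Ω → H` with bound `B`, the diagonal map
`F ⊕ F : Ω → H ⊕ H` is a continuous `(K₁ ⊕ K₂)`-frame (for some positive bounds) if and
only if `K₁ = 0` and `K₂ = 0`. -/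
theorem diagonal_prod_K_frame_iff_zero
    {𝕜 : Type*} [RCLike 𝕜] [MeasurableSpace 𝕜] [BorelSpace 𝕜]
    {H : Type*} [NormedAddCommGroup H] [InnerProductSpace 𝕜 H] [CompleteSpace H]
    {Ω : Type*} [MeasurableSpace Ω] {μ : Measure Ω}
    (K₁ K₂ : H →L[𝕜] H) (F : Ω → H) (B : ℝ) (hB : 0 < B)
    (hmeas : ∀ u : H, Measurable fun ω => (inner 𝕜 (F ω) u : 𝕜))
    (hbound : ∀ u : H, ∫ ω, ‖(inner 𝕜 (F ω) u : 𝕜)‖ ^ 2 ∂μ ≤ B * ‖u‖ ^ 2) :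
    (∃ A B' : ℝ, 0 < A ∧ A ≤ B' ∧ ∀ x : WithLp 2 (H × H),
      A * ‖ContinuousLinearMap.adjoint (prodOp K₁ K₂) x‖ ^ 2 ≤
        ∫ ω, ‖(inner 𝕜 ((WithLp.equiv 2 (H × H)).symm (F ω, F ω)) x : 𝕜)‖ ^ 2 ∂μ ∧
      ∫ ω, ‖(inner 𝕜 ((WithLp.equiv 2 (H × H)).symm (F ω, F ω)) x : 𝕜)‖ ^ 2 ∂μ ≤
        B' * ‖x‖ ^ 2) ↔
    (K₁ = 0 ∧ K₂ = 0) := by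
  constructor
  · rintro ⟨A, B', hA, hAB, hframe⟩
    have key : ∀ u : H, ContinuousLinearMap.adjoint K₁ u = 0 ∧
        ContinuousLinearMap.adjoint K₂ u = 0 := by
      intro u
      set x : WithLp 2 (H × H) := (WithLp.equiv 2 (H × H)).symm (u, -u) with hx
      have hint : ∀ ω, (inner 𝕜 ((WithLp.equiv 2 (H × H)).symm (F ω, F ω)) x : 𝕜) = 0 := by
        intro ω
        simp [x, WithLp.prod_inner_apply, inner_neg_right]
      have h1 := (hframe x).1
      rw [show (∫ ω, ‖(inner 𝕜 ((WithLp.equiv 2 (H × H)).symm (F ω, F ω)) x : 𝕜)‖ ^ 2 ∂μ) = 0 by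
        simp only [hint]; simp] at h1
      have hz : ContinuousLinearMap.adjoint (prodOp K₁ K₂) x = 0 := by
        have hs : ‖ContinuousLinearMap.adjoint (prodOp K₁ K₂) x‖ ^ 2 ≤ 0 := by
          by_contra h
          push_neg at h
          nlinarith [mul_pos hA h]
        have hn : ‖ContinuousLinearMap.adjoint (prodOp K₁ K₂) x‖ = 0 := by
          nlinarith [sq_nonneg ‖ContinuousLinearMap.adjoint (prodOp K₁ K₂) x‖,
            norm_nonneg (ContinuousLinearMap.adjoint (prodOp K₁ K₂) x)]
        exact norm_eq_zero.mp hn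
      rw [adjoint_prodOp] at hz
      have h1 : (prodOp (ContinuousLinearMap.adjoint K₁)
          (ContinuousLinearMap.adjoint K₂) x).fst = 0 := by rw [hz]; rfl
      have h2 : (prodOp (ContinuousLinearMap.adjoint K₁)
          (ContinuousLinearMap.adjoint K₂) x).snd = 0 := by rw [hz]; rfl
      rw [prodOp_fst] at h1
      rw [prodOp_snd] at h2
      have hxf : x.fst = u := rfl
      have hxs : x.snd = -u := rfl
      rw [hxf] at h1
      rw [hxs, map_neg, neg_eq_zero] at h2
      exact ⟨h1, h2⟩
    have h1 : ContinuousLinearMap.adjoint K₁ = 0 :=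
      ContinuousLinearMap.ext fun u => (key u).1
    have h2 : ContinuousLinearMap.adjoint K₂ = 0 :=
      ContinuousLinearMap.ext fun u => (key u).2
    constructor
    · have := congrArg ContinuousLinearMap.adjoint h1
      rwa [ContinuousLinearMap.adjoint_adjoint, map_zero] at this
    · have := congrArg ContinuousLinearMap.adjoint h2
      rwa [ContinuousLinearMap.adjoint_adjoint, map_zero] at this
  · rintro ⟨rfl, rfl⟩
    refine ⟨B, 2 * B, hB, by linarith, fun x => ?_⟩
    have hzero : prodOp (0 : H →L[𝕜] H) (0 : H →L[𝕜] H) = 0 := by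
      ext y <;> rfl
    have hadj : ContinuousLinearMap.adjoint (prodOp (0 : H →L[𝕜] H) (0 : H →L[𝕜] H)) = 0 := by
      rw [hzero]; exact map_zero _
    constructor
    · rw [hadj]
      simp only [ContinuousLinearMap.zero_apply, norm_zero]
      rw [zero_pow (by norm_num), mul_zero]
      exact integral_nonneg fun ω => by positivity
    · have hinteq : ∀ ω, (inner 𝕜 ((WithLp.equiv 2 (H × H)).symm (F ω, F ω)) x : 𝕜) =
          inner 𝕜 (F ω) (x.fst + x.snd) := by
        intro ω
        simp [WithLp.prod_inner_apply, inner_add_right]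
      calc ∫ ω, ‖(inner 𝕜 ((WithLp.equiv 2 (H × H)).symm (F ω, F ω)) x : 𝕜)‖ ^ 2 ∂μ
          = ∫ ω, ‖(inner 𝕜 (F ω) (x.fst + x.snd) : 𝕜)‖ ^ 2 ∂μ := by
            congr 1; ext ω; rw [hinteq]
        _ ≤ B * ‖x.fst + x.snd‖ ^ 2 := hbound _
        _ ≤ 2 * B * ‖x‖ ^ 2 := by
            have h1 : ‖x.fst + x.snd‖ ^ 2 ≤ 2 * (‖x.fst‖ ^ 2 + ‖x.snd‖ ^ 2) := by
              have h := norm_add_le x.fst x.snd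
              have h' := mul_self_le_mul_self (norm_nonneg (x.fst + x.snd)) h
              nlinarith [sq_nonneg (‖x.fst‖ - ‖x.snd‖)]
            have h2 : ‖x‖ ^ 2 = ‖x.fst‖ ^ 2 + ‖x.snd‖ ^ 2 := by
              rw [WithLp.prod_norm_sq_eq_of_L2]
            nlinarith [hB.le, sq_nonneg ‖x.fst + x.snd‖]
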